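/- Let C : PPO_A^I → PPO_A be an arrovian voting system on at least three alternatives, and let δN be the minimal decisive set relative to N, with ΔN = δN ∪ N. Then Δ satisfies: (1) N ⊆ ΔN and ΔM ⊆ ΔN for M ⊆ N; (2) if ΔN ∩ M = ∅ then Δ(N ⊔ M) = ΔN ⊔ M; and (3) a ≽ b in the aggregate iff there exists N ⊆ I with a ≈_N b and a ≻_{δN} b. Moreover, Δ is the unique map 2^I → 2^I with these three properties. -/
import Mathlib


variable {A I : Type*}

/-- A partial preorder: a reflexive and transitive binary relation. -/
def IsPPO (P : A → A → Prop) : Prop := Reflexive P ∧ Transitive P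

/-- A linear (total) preorder: reflexive, transitive and complete. -/
def IsLPO (P : A → A → Prop) : Prop := Reflexive P ∧ Transitive P ∧ ∀ a b, P a b ∨ P b a

/-- A profile of partial preorders. -/
def IsPPOProfile (P : I → A → A → Prop) : Prop := ∀ i, IsPPO (P i)

/-- A profile of linear (total) preorders. -/
def IsLPOProfile (P : I → A → A → Prop) : Prop := ∀ i, IsLPO (P i)

/-- Strict preference. -/
def StrictPref (P : A → A → Prop) (a b : A) : Prop := P a b ∧ ¬ P b a

/-- Indifference. -/
def Indiff (P : A → A → Prop) (a b : A) : Prop := P a b ∧ P b a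

/-- The set `A` contains at least three distinct alternatives. -/
def ThreeAlts (A : Type*) : Prop := ∃ a b c : A, a ≠ b ∧ b ≠ c ∧ a ≠ c

/-- Unanimity. -/
def Unanimity (C : (I → A → A → Prop) → A → A → Prop) : Prop :=
  ∀ P, IsPPOProfile P → ∀ a b : A, (∀ i, P i a b) → C P a b

/-- Independence of irrelevant alternatives. -/
def IIA (C : (I → A → A → Prop) → A → A → Prop) : Prop :=
  ∀ P P' : I → A → A → Prop, IsPPOProfile P → IsPPOProfile P' → ∀ a b : A,
    {i | P i a b} = {i | P' i a b} → {i | P i b a} = {i | P' i b a} →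
    (C P a b ↔ C P' a b)

/-- Neutrality: `C (ρ*P) = ρ*(C P)` for every permutation `ρ` of the alternatives. -/
def Neutrality (C : (I → A → A → Prop) → A → A → Prop) : Prop :=
  ∀ (ρ : Equiv.Perm A) (P : I → A → A → Prop), IsPPOProfile P →
    ∀ x y : A, C (fun i a b => P i (ρ.symm a) (ρ.symm b)) x y ↔ C P (ρ.symm x) (ρ.symm y)

/-- Monotonicity. -/
def Monotonicity (C : (I → A → A → Prop) → A → A → Prop) : Prop :=
  ∀ P P' : I → A → A → Prop, IsPPOProfile P → IsPPOProfile P' → ∀ a b : A,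
    {i | P i a b} ⊆ {i | P' i a b} → {i | P' i b a} ⊆ {i | P i b a} →
    C P a b → C P' a b

/-- `J` is a decisive set: unanimous strict preference on `J` forces weak aggregate preference. -/
def Decisive (C : (I → A → A → Prop) → A → A → Prop) (J : Set I) : Prop :=
  ∀ P, IsPPOProfile P → ∀ a b : A, (∀ j ∈ J, StrictPref (P j) a b) → C P a b

/-- `J` is a strongly decisive set: unanimous weak preference on `J` forces weak aggregate preference. -/
def SDecisive (C : (I → A → A → Prop) → A → A → Prop) (J : Set I) : Prop :=
  ∀ P, IsPPOProfile P → ∀ a b : A, (∀ j ∈ J, P j a b) → C P a b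

/-- `J` is decisive relative to `N`: if all members of `N` are indifferent and all members
of `J` strictly prefer `a` to `b`, then `a ≽ b` in the aggregate. -/
def RelDecisive (C : (I → A → A → Prop) → A → A → Prop) (N J : Set I) : Prop :=
  ∀ P, IsPPOProfile P → ∀ a b : A,
    (∀ i ∈ N, Indiff (P i) a b) → (∀ j ∈ J, StrictPref (P j) a b) → C P a b

/-- `δ` assigns to each `N ⊆ I` the minimal set `δ N ⊆ I \ N` decisive relative to `N`. -/
def MinRelDecisive (C : (I → A → A → Prop) → A → A → Prop) (δ : Set I → Set I) : Prop :=
  ∀ N : Set I, δ N ⊆ Nᶜ ∧ RelDecisive C N (δ N) ∧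
    ∀ J : Set I, J ⊆ Nᶜ → RelDecisive C N J → δ N ⊆ J

/-- The three characteristic properties of the coalition structure map `Δ`. -/
def CoalStruct (C : (I → A → A → Prop) → A → A → Prop) (Δ : Set I → Set I) : Prop :=
  ((∀ N : Set I, N ⊆ Δ N) ∧ (∀ M N : Set I, M ⊆ N → Δ M ⊆ Δ N)) ∧
  (∀ N M : Set I, Δ N ∩ M = ∅ → Δ (N ∪ M) = Δ N ∪ M) ∧
  (∀ P : I → A → A → Prop, IsPPOProfile P → ∀ a b : A,
    C P a b ↔ ∃ N : Set I, (∀ i ∈ N, Indiff (P i) a b) ∧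
      ∀ j ∈ Δ N \ N, StrictPref (P j) a b)

/-- generic three-alternative profile -/
def tri (a b c : A) (Sab Sba Sac Sca Sbc Scb : Set I) : I → A → A → Prop :=
  fun i x y => x = y ∨ (x = a ∧ y = b ∧ i ∈ Sab) ∨ (x = b ∧ y = a ∧ i ∈ Sba)
    ∨ (x = a ∧ y = c ∧ i ∈ Sac) ∨ (x = c ∧ y = a ∧ i ∈ Sca)
    ∨ (x = b ∧ y = c ∧ i ∈ Sbc) ∨ (x = c ∧ y = b ∧ i ∈ Scb)

lemma tri_profile {a b c : A} (hab : a ≠ b) (hac : a ≠ c) (hbc : b ≠ c)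
    {Sab Sba Sac Sca Sbc Scb : Set I}
    (h1 : Sab ∩ Sbc ⊆ Sac) (h2 : Sac ∩ Scb ⊆ Sab) (h3 : Sba ∩ Sac ⊆ Sbc)
    (h4 : Sbc ∩ Sca ⊆ Sba) (h5 : Sca ∩ Sab ⊆ Scb) (h6 : Scb ∩ Sba ⊆ Sca) :
    IsPPOProfile (tri a b c Sab Sba Sac Sca Sbc Scb : I → A → A → Prop) := by
  intro i
  constructor
  · intro x; exact Or.inl rfl
  · intro x y z hxy hyz
    rcases hxy with rfl | ⟨rfl, rfl, p⟩ | ⟨rfl, rfl, p⟩ | ⟨rfl, rfl, p⟩ | ⟨rfl, rfl, p⟩ |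
      ⟨rfl, rfl, p⟩ | ⟨rfl, rfl, p⟩ <;>
    rcases hyz with rfl | ⟨e1, rfl, q⟩ | ⟨e1, rfl, q⟩ | ⟨e1, rfl, q⟩ | ⟨e1, rfl, q⟩ |
      ⟨e1, rfl, q⟩ | ⟨e1, rfl, q⟩ <;>
    simp_all [tri] <;> tauto

section pat
variable {a b c : A}
  (Sab Sba Sac Sca Sbc Scb : Set I)

lemma tri_ab (hab : a ≠ b) (hac : a ≠ c) (hbc : b ≠ c) : {i : I | tri a b c Sab Sba Sac Sca Sbc Scb i a b} = Sab := by
  ext i; simp [tri, hab, hac, hbc, hab.symm, hac.symm, hbc.symm]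
lemma tri_ba (hab : a ≠ b) (hac : a ≠ c) (hbc : b ≠ c) : {i : I | tri a b c Sab Sba Sac Sca Sbc Scb i b a} = Sba := by
  ext i; simp [tri, hab, hac, hbc, hab.symm, hac.symm, hbc.symm]
lemma tri_ac (hab : a ≠ b) (hac : a ≠ c) (hbc : b ≠ c) : {i : I | tri a b c Sab Sba Sac Sca Sbc Scb i a c} = Sac := by
  ext i; simp [tri, hab, hac, hbc, hab.symm, hac.symm, hbc.symm]
lemma tri_ca (hab : a ≠ b) (hac : a ≠ c) (hbc : b ≠ c) : {i : I | tri a b c Sab Sba Sac Sca Sbc Scb i c a} = Sca := by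
  ext i; simp [tri, hab, hac, hbc, hab.symm, hac.symm, hbc.symm]
lemma tri_bc (hab : a ≠ b) (hac : a ≠ c) (hbc : b ≠ c) :
    {i : I | tri a b c Sab Sba Sac Sca Sbc Scb i b c} = Sbc := by
  ext i; simp [tri, hab, hac, hbc, hab.symm, hac.symm, hbc.symm]
lemma tri_cb (hab : a ≠ b) (hac : a ≠ c) (hbc : b ≠ c) : {i : I | tri a b c Sab Sba Sac Sca Sbc Scb i c b} = Scb := by
  ext i; simp [tri, hab, hac, hbc, hab.symm, hac.symm, hbc.symm]
lemma tri_bc_univ : ∀ i : I, tri a b c Sab Sba Sac Sca (Set.univ) Scb i b c := by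
  intro i; exact Or.inr (Or.inr (Or.inr (Or.inr (Or.inr (Or.inl ⟨rfl, rfl, trivial⟩)))))
lemma tri_cb_univ : ∀ i : I, tri a b c Sab Sba Sac Sca Sbc (Set.univ) i c b := by
  intro i; exact Or.inr (Or.inr (Or.inr (Or.inr (Or.inr (Or.inr ⟨rfl, rfl, trivial⟩)))))
lemma tri_ca_univ : ∀ i : I, tri a b c Sab Sba Sac (Set.univ) Sbc Scb i c a := by
  intro i; exact Or.inr (Or.inr (Or.inr (Or.inr (Or.inl ⟨rfl, rfl, trivial⟩))))
lemma tri_ac_univ : ∀ i : I, tri a b c Sab Sba (Set.univ) Sca Sbc Scb i a c := by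
  intro i; exact Or.inr (Or.inr (Or.inr (Or.inl ⟨rfl, rfl, trivial⟩)))
end pat

/-- generic two-alternative profile -/
def duo (a b : A) (S T : Set I) : I → A → A → Prop :=
  fun i x y => x = y ∨ (x = a ∧ y = b ∧ i ∈ S) ∨ (x = b ∧ y = a ∧ i ∈ T)

lemma duo_profile (a b : A) (S T : Set I) : IsPPOProfile (duo a b S T : I → A → A → Prop) := by
  intro i
  constructor
  · intro x; exact Or.inl rfl
  · intro x y z hxy hyz
    rcases hxy with rfl | ⟨rfl, rfl, p⟩ | ⟨rfl, rfl, p⟩ <;>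
    rcases hyz with rfl | ⟨e1, rfl, q⟩ | ⟨e1, rfl, q⟩ <;> simp_all [duo]

lemma duo_ab {a b : A} (hab : a ≠ b) (S T : Set I) :
    {i : I | duo a b S T i a b} = S := by ext i; simp [duo, hab, hab.symm]
lemma duo_ba {a b : A} (hab : a ≠ b) (S T : Set I) :
    {i : I | duo a b S T i b a} = T := by ext i; simp [duo, hab, hab.symm]

section machinery
variable (C : (I → A → A → Prop) → A → A → Prop)

/-- `(S,T)` is a winning pattern. -/
def Wins (S T : Set I) : Prop :=
  ∀ P, IsPPOProfile P → ∀ a b : A, a ≠ b →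
    {i | P i a b} = S → {i | P i b a} = T → C P a b

/-- `(S,T)` is a winning pattern for the fixed pair `(a,b)`. -/
def WinsAt (S T : Set I) (a b : A) : Prop :=
  ∀ P, IsPPOProfile P → {i | P i a b} = S → {i | P i b a} = T → C P a b

variable {C}

lemma winsAt_of_C (hIIA : IIA C) {P : I → A → A → Prop} (hP : IsPPOProfile P)
    {a b : A} (h : C P a b) : WinsAt C {i | P i a b} {i | P i b a} a b := by
  intro P' hP' hS hT
  exact (hIIA P P' hP hP' a b hS.symm hT.symm).mp h

lemma exists_third (hA : ThreeAlts A) (u v : A) : ∃ w : A, w ≠ u ∧ w ≠ v := by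
  obtain ⟨p, q, r, hpq, hqr, hpr⟩ := id hA
  by_cases hpu : p = u
  · subst hpu
    by_cases hqv : q = v
    · subst hqv
      exact ⟨r, fun h => hpr h.symm, fun h => hqr h.symm⟩
    · exact ⟨q, fun h => hpq h.symm, hqv⟩
  · by_cases hpv : p = v
    · subst hpv
      by_cases hqu : q = u
      · subst hqu
        exact ⟨r, fun h => hqr h.symm, fun h => hpr h.symm⟩
      · exact ⟨q, hqu, fun h => hpq h.symm⟩
    · exact ⟨p, hpu, hpv⟩


/-- move the second coordinate of the pair -/
lemma winsAt_move_snd (hC : ∀ P, IsPPOProfile P → IsPPO (C P)) (hU : Unanimity C) (hIIA : IIA C) {S T : Set I} {a b c : A} (hab : a ≠ b) (hac : a ≠ c) (hbc : b ≠ c)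
    (h : WinsAt C S T a b) : WinsAt C S T a c := by
  set Q : I → A → A → Prop := tri a b c S T S T Set.univ Set.univ with hQ
  have hQP : IsPPOProfile Q := tri_profile hab hac hbc
    (by intro i hi; exact hi.1) (by intro i hi; exact hi.1)
    (by intro i _; trivial) (by intro i hi; exact hi.2)
    (by intro i _; trivial) (by intro i hi; exact hi.2)
  have hab' : C Q a b := h Q hQP (tri_ab _ _ _ _ _ _ hab hac hbc) (tri_ba _ _ _ _ _ _ hab hac hbc)
  have hbc' : C Q b c := hU Q hQP b c (tri_bc_univ _ _ _ _ _)
  have hac' : C Q a c := (hC Q hQP).2 hab' hbc'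
  intro P' hP' hS hT
  exact (winsAt_of_C hIIA hQP hac') P' hP'
    (by rw [hS, tri_ac _ _ _ _ _ _ hab hac hbc])
    (by rw [hT, tri_ca _ _ _ _ _ _ hab hac hbc])

/-- move the first coordinate of the pair -/
lemma winsAt_move_fst (hC : ∀ P, IsPPOProfile P → IsPPO (C P)) (hU : Unanimity C) (hIIA : IIA C) {S T : Set I} {a b c : A} (hab : a ≠ b) (hac : a ≠ c) (hbc : b ≠ c)
    (h : WinsAt C S T a b) : WinsAt C S T c b := by
  set Q : I → A → A → Prop := tri a b c S T Set.univ Set.univ T S with hQ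
  have hQP : IsPPOProfile Q := tri_profile hab hac hbc
    (by intro i _; trivial) (by intro i hi; exact hi.2)
    (by intro i hi; exact hi.1) (by intro i hi; exact hi.1)
    (by intro i hi; exact hi.2) (by intro i _; trivial)
  have hab' : C Q a b := h Q hQP (tri_ab _ _ _ _ _ _ hab hac hbc) (tri_ba _ _ _ _ _ _ hab hac hbc)
  have hca' : C Q c a := hU Q hQP c a (tri_ca_univ _ _ _ _ _)
  have hcb' : C Q c b := (hC Q hQP).2 hca' hab'
  intro P' hP' hS hT
  exact (winsAt_of_C hIIA hQP hcb') P' hP'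
    (by rw [hS, tri_cb _ _ _ _ _ _ hab hac hbc])
    (by rw [hT, tri_bc _ _ _ _ _ _ hab hac hbc])

lemma winsAt_all (hA : ThreeAlts A) (hC : ∀ P, IsPPOProfile P → IsPPO (C P))
    (hU : Unanimity C) (hIIA : IIA C) {S T : Set I} {a b : A} (hab : a ≠ b)
    (h : WinsAt C S T a b) : ∀ x y : A, x ≠ y → WinsAt C S T x y := by
  intro x y hxy
  by_cases hxa : x = a
  · subst hxa
    by_cases hyb : y = b
    · subst hyb; exact h
    · exact winsAt_move_snd hC hU hIIA hab hxy (fun e => hyb e.symm) h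
  · by_cases hyb : y = b
    · subst hyb
      exact winsAt_move_fst hC hU hIIA hab (fun e => hxa e.symm) (fun e => hxy e.symm) h
    · by_cases hxb : x = b
      · subst hxb
        by_cases hya : y = a
        · subst hya
          obtain ⟨c, hcx, hcy⟩ := exists_third hA x y
          have h1 := winsAt_move_snd hC hU hIIA hab (fun e => hcy e.symm) (fun e => hcx e.symm) h
          have h2 := winsAt_move_fst hC hU hIIA (fun e => hcy e.symm) hab hcx h1
          exact winsAt_move_snd hC hU hIIA (fun e => hcx e.symm) hxy hcy h2
        · have h1 := winsAt_move_snd hC hU hIIA hab (fun e => hya e.symm) hxy h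
          exact winsAt_move_fst hC hU hIIA (fun e => hya e.symm) hab (fun e => hxy e.symm) h1
      · by_cases hya : y = a
        · subst hya
          have h1 := winsAt_move_fst hC hU hIIA hab (fun e => hxy e.symm) (fun e => hxb e.symm) h
          exact winsAt_move_snd hC hU hIIA hxb hxy (fun e => hab e.symm) h1
        · have h1 := winsAt_move_snd hC hU hIIA hab (fun e => hya e.symm) (fun e => hyb e.symm) h
          exact winsAt_move_fst hC hU hIIA (fun e => hya e.symm) (fun e => hxa e.symm)
            (fun e => hxy e.symm) h1

lemma win_of_C (hA : ThreeAlts A) (hC : ∀ P, IsPPOProfile P → IsPPO (C P))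
    (hU : Unanimity C) (hIIA : IIA C) {P : I → A → A → Prop} (hP : IsPPOProfile P)
    {a b : A} (hab : a ≠ b) (h : C P a b) : Wins C {i | P i a b} {i | P i b a} := by
  intro P' hP' x y hxy hS hT
  exact winsAt_all hA hC hU hIIA hab (winsAt_of_C hIIA hP h) x y hxy P' hP' hS hT

lemma win_mono (hA : ThreeAlts A) (hC : ∀ P, IsPPOProfile P → IsPPO (C P))
    (hU : Unanimity C) (hIIA : IIA C) {S T S' T' : Set I}
    (h : Wins C S T) (hS : S ⊆ S') (hT : T' ⊆ T) : Wins C S' T' := by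
  obtain ⟨a, b, c, hab, hbc, hac⟩ := id hA
  set Q : I → A → A → Prop := tri a b c S T S' T' Set.univ (S ∩ T') with hQdef
  have hQP : IsPPOProfile Q := tri_profile hab hac hbc
    (fun i hi => hS hi.1) (fun i hi => hi.2.1) (fun i _ => trivial)
    (fun i hi => hT hi.2) (fun i hi => ⟨hi.2, hi.1⟩) (fun i hi => hi.1.2)
  have hab' : C Q a b := h Q hQP a b hab (tri_ab _ _ _ _ _ _ hab hac hbc)
    (tri_ba _ _ _ _ _ _ hab hac hbc)
  have hbc' : C Q b c := hU Q hQP b c (tri_bc_univ _ _ _ _ _)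
  have hac' : C Q a c := (hC Q hQP).2 hab' hbc'
  have := win_of_C hA hC hU hIIA hQP hac hac'
  rwa [tri_ac _ _ _ _ _ _ hab hac hbc, tri_ca _ _ _ _ _ _ hab hac hbc] at this

lemma win_losers (hA : ThreeAlts A) (hC : ∀ P, IsPPOProfile P → IsPPO (C P))
    (hU : Unanimity C) (hIIA : IIA C) {S T : Set I}
    (h : Wins C S T) : Wins C S (T ∪ Sᶜ) := by
  obtain ⟨a, b, c, hab, hbc, hac⟩ := id hA
  set Q : I → A → A → Prop := tri a b c S (T ∪ Sᶜ) S T (S ∩ T) (S ∪ T) with hQdef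
  have hQP : IsPPOProfile Q := tri_profile hab hac hbc
    (fun i hi => hi.1) (fun i hi => hi.1)
    (fun i hi => by rcases hi.1 with h' | h'; exact ⟨hi.2, h'⟩; exact absurd hi.2 h')
    (fun i hi => Or.inl hi.1.2) (fun i hi => Or.inr hi.1)
    (fun i hi => by rcases hi.1 with h' | h'
                    · rcases hi.2 with h'' | h''; exact h''; exact absurd h' h''
                    · exact h')
  have hac' : C Q a c := h Q hQP a c hac (tri_ac _ _ _ _ _ _ hab hac hbc)
    (tri_ca _ _ _ _ _ _ hab hac hbc)
  have hcb' : C Q c b := win_mono hA hC hU hIIA h Set.subset_union_left Set.inter_subset_right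
    Q hQP c b (fun e => hbc e.symm) (tri_cb _ _ _ _ _ _ hab hac hbc)
    (tri_bc _ _ _ _ _ _ hab hac hbc)
  have hab' : C Q a b := (hC Q hQP).2 hac' hcb'
  have := win_of_C hA hC hU hIIA hQP hab hab'
  rwa [tri_ab _ _ _ _ _ _ hab hac hbc, tri_ba _ _ _ _ _ _ hab hac hbc] at this

lemma relDecisive_of_win (hA : ThreeAlts A) (hC : ∀ P, IsPPOProfile P → IsPPO (C P))
    (hU : Unanimity C) (hIIA : IIA C) {N J : Set I}
    (h : Wins C (N ∪ J) Jᶜ) : RelDecisive C N J := by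
  intro P hP a b hN hJ
  by_cases hab : a = b
  · subst hab; exact (hC P hP).1 a
  · refine win_mono hA hC hU hIIA h ?_ ?_ P hP a b hab rfl rfl
    · rintro i (hi | hi)
      · exact (hN i hi).1
      · exact (hJ i hi).1
    · intro i hi hiJ
      exact (hJ i hiJ).2 hi

lemma win_of_relDecisive (hA : ThreeAlts A) (hC : ∀ P, IsPPOProfile P → IsPPO (C P))
    (hU : Unanimity C) (hIIA : IIA C) {N J : Set I} (hJN : J ⊆ Nᶜ)
    (h : RelDecisive C N J) : Wins C (N ∪ J) Jᶜ := by
  obtain ⟨a, b, c, hab, hbc, hac⟩ := id hA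
  set P : I → A → A → Prop := duo a b (N ∪ J) Jᶜ with hPdef
  have hP : IsPPOProfile P := duo_profile a b _ _
  have hCP : C P a b := by
    apply h P hP a b
    · intro i hi
      exact ⟨Or.inr (Or.inl ⟨rfl, rfl, Or.inl hi⟩),
             Or.inr (Or.inr ⟨rfl, rfl, fun hj => hJN hj hi⟩)⟩
    · intro j hj
      refine ⟨Or.inr (Or.inl ⟨rfl, rfl, Or.inr hj⟩), ?_⟩
      rintro (e | ⟨e1, e2, _⟩ | ⟨_, _, hj'⟩)
      · exact hab e.symm
      · exact hab e1.symm
      · exact hj' hj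
  have := win_of_C hA hC hU hIIA hP hab hCP
  rwa [duo_ab hab, duo_ba hab] at this

end machinery
theorem classification_of_arrovian_juntas [Fintype I] (C : (I → A → A → Prop) → A → A → Prop)
    (hA : ThreeAlts A)
    (hC : ∀ P, IsPPOProfile P → IsPPO (C P))
    (hU : Unanimity C) (hIIA : IIA C)
    (δ : Set I → Set I) (hδ : MinRelDecisive C δ) :
    CoalStruct C (fun N => δ N ∪ N) ∧
    ∀ Δ' : Set I → Set I, CoalStruct C Δ' → Δ' = fun N => δ N ∪ N := by
  have base : ∀ N : Set I, Wins C (N ∪ δ N) (δ N)ᶜ :=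
    fun N => win_of_relDecisive hA hC hU hIIA (hδ N).1 (hδ N).2.1
  constructor
  · refine ⟨⟨fun N => Set.subset_union_right, ?_⟩, ?_, ?_⟩
    · -- monotonicity of Δ
      intro M N hMN
      have hRD : RelDecisive C M ((δ N ∪ N) \ M) := by
        apply relDecisive_of_win hA hC hU hIIA
        apply win_mono hA hC hU hIIA (base N)
        · intro i hi
          by_cases him : i ∈ M
          · exact Or.inl him
          · exact Or.inr ⟨hi.elim (fun h => Or.inr h) (fun h => Or.inl h), him⟩
        · intro i hi hid
          rcases (not_and_or.mp hi) with h' | h'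
          · exact h' (Or.inl hid)
          · exact (hδ N).1 hid (hMN (not_not.mp h'))
      have hsub : δ M ⊆ (δ N ∪ N) \ M := (hδ M).2.2 _ (fun j hj => hj.2) hRD
      rintro i (hi | hi)
      · exact (hsub hi).1
      · exact Or.inr (hMN hi)
    · -- additivity
      intro N M hdisj
      have hMδ : ∀ i ∈ M, i ∉ δ N ∧ i ∉ N := by
        intro i hiM
        constructor <;> intro h'
        · exact absurd (hdisj ▸ (⟨Or.inl h', hiM⟩ : i ∈ (δ N ∪ N) ∩ M)) (Set.notMem_empty i)
        · exact absurd (hdisj ▸ (⟨Or.inr h', hiM⟩ : i ∈ (δ N ∪ N) ∩ M)) (Set.notMem_empty i)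
      have sub1 : δ (N ∪ M) ⊆ δ N := by
        apply (hδ (N ∪ M)).2.2
        · rintro j hj (hjN | hjM)
          · exact (hδ N).1 hj hjN
          · exact (hMδ j hjM).1 hj
        · apply relDecisive_of_win hA hC hU hIIA
          apply win_mono hA hC hU hIIA (base N)
          · rintro i (hi | hi)
            · exact Or.inl (Or.inl hi)
            · exact Or.inr hi
          · exact fun i hi => hi
      have sub2 : δ N ⊆ δ (N ∪ M) ∪ M := by
        apply (hδ N).2.2
        · rintro j (hj | hj) hjN
          · exact (hδ (N ∪ M)).1 hj (Or.inl hjN)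
          · exact (hMδ j hj).2 hjN
        · apply relDecisive_of_win hA hC hU hIIA
          apply win_mono hA hC hU hIIA (base (N ∪ M))
          · rintro i (⟨hi | hi⟩ | hi)
            · exact Or.inl hi
            · exact Or.inr (Or.inr hi)
            · exact Or.inr (Or.inl hi)
          · intro i hi hid
            exact hi (Or.inl hid)
      ext i
      constructor
      · rintro (hi | hi | hi)
        · rcases sub1 hi with h'
          exact Or.inl (Or.inl h')
        · exact Or.inl (Or.inr hi)
        · exact Or.inr hi
      · rintro (⟨hi | hi⟩ | hi)
        · rcases sub2 hi with h' | h'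
          · exact Or.inl h'
          · exact Or.inr (Or.inr h')
        · exact Or.inr (Or.inl hi)
        · exact Or.inr (Or.inr hi)
    · -- characterization of C
      intro P hP a b
      constructor
      · intro hCP
        by_cases hab : a = b
        · subst hab
          refine ⟨Set.univ, fun i _ => ⟨(hP i).1 a, (hP i).1 a⟩, fun j hj => absurd (Set.mem_univ j) hj.2⟩
        · set N : Set I := {i | Indiff (P i) a b} with hNdef
          set J : Set I := {i | StrictPref (P i) a b} with hJdef
          have e1 : N ∪ J = {i | P i a b} := by
            ext i
            constructor
            · rintro (hi | hi)
              · exact hi.1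
              · exact hi.1
            · intro hi
              by_cases h' : P i b a
              · exact Or.inl ⟨hi, h'⟩
              · exact Or.inr ⟨hi, h'⟩
          have e2 : Jᶜ = {i | P i b a} ∪ {i | P i a b}ᶜ := by
            ext i
            constructor
            · intro hi
              rcases not_and_or.mp hi with h' | h'
              · exact Or.inr h'
              · exact Or.inl (not_not.mp h')
            · rintro (hi | hi) ⟨h1, h2⟩
              · exact h2 hi
              · exact hi h1
          have hwins : Wins C (N ∪ J) Jᶜ := by
            rw [e1, e2]
            exact win_losers hA hC hU hIIA (win_of_C hA hC hU hIIA hP hab hCP)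
          have hRD : RelDecisive C N J := relDecisive_of_win hA hC hU hIIA hwins
          have hsub : δ N ⊆ J := (hδ N).2.2 J (fun i hi hiN => hi.2 hiN.2) hRD
          exact ⟨N, fun i hi => hi, fun j hj =>
            hsub (hj.1.elim (fun h => h) (fun h => absurd h hj.2))⟩
      · rintro ⟨N, h1, h2⟩
        exact (hδ N).2.1 P hP a b h1
          (fun j hj => h2 j ⟨Or.inl hj, fun hjN => (hδ N).1 hj hjN⟩)
  · -- uniqueness
    intro Δ' hΔ'
    obtain ⟨⟨h1a, _⟩, h2, h3⟩ := hΔ'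
    funext N
    apply Set.Subset.antisymm
    · -- Δ' N ⊆ δ N ∪ N
      obtain ⟨a, b, _, hab, _, _⟩ := id hA
      set P : I → A → A → Prop := duo a b (N ∪ δ N) (δ N)ᶜ with hPdef
      have hP : IsPPOProfile P := duo_profile a b _ _
      have hCP : C P a b := by
        apply (hδ N).2.1 P hP a b
        · intro i hi
          exact ⟨Or.inr (Or.inl ⟨rfl, rfl, Or.inl hi⟩),
                 Or.inr (Or.inr ⟨rfl, rfl, fun hd => (hδ N).1 hd hi⟩)⟩
        · intro j hj
          refine ⟨Or.inr (Or.inl ⟨rfl, rfl, Or.inr hj⟩), ?_⟩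
          rintro (e | ⟨e1, _, _⟩ | ⟨_, _, hj'⟩)
          · exact hab e.symm
          · exact hab e1.symm
          · exact hj' hj
      obtain ⟨M, hM1, hM2⟩ := (h3 P hP a b).mp hCP
      have hget : ∀ i, P i a b → i ∈ N ∪ δ N := by
        rintro i (e | ⟨_, _, hi⟩ | ⟨e, _, _⟩)
        · exact absurd e hab
        · exact hi
        · exact absurd e hab
      have hget2 : ∀ i, P i b a → i ∈ (δ N)ᶜ := by
        rintro i (e | ⟨e, _, _⟩ | ⟨_, _, hi⟩)
        · exact absurd e.symm hab
        · exact absurd e.symm hab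
        · exact hi
      have hMN : M ⊆ N := by
        intro i hi
        rcases hget i (hM1 i hi).1 with h' | h'
        · exact h'
        · exact absurd h' (hget2 i (hM1 i hi).2)
      have hM2' : Δ' M \ M ⊆ δ N := by
        intro j hj
        rcases hget j (hM2 j hj).1 with h' | h'
        · exfalso
          apply (hM2 j hj).2
          exact Or.inr (Or.inr ⟨rfl, rfl, fun hd => (hδ N).1 hd h'⟩)
        · exact h'
      have hdisj : Δ' M ∩ (N \ M) = ∅ := by
        ext i
        simp only [Set.mem_inter_iff, Set.mem_diff, Set.mem_empty_iff_false, iff_false]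
        rintro ⟨hi1, hi2, hi3⟩
        exact (hδ N).1 (hM2' ⟨hi1, hi3⟩) hi2
      have hMun : M ∪ (N \ M) = N := Set.union_diff_cancel' (fun i hi => hi) hMN
      have heq := h2 M (N \ M) hdisj
      rw [hMun] at heq
      rw [heq]
      rintro i (hi | hi)
      · by_cases him : i ∈ M
        · exact Or.inr (hMN him)
        · exact Or.inl (hM2' ⟨hi, him⟩)
      · exact Or.inr hi.1
    · -- δ N ∪ N ⊆ Δ' N
      rintro i (hi | hi)
      · have hRD : RelDecisive C N (Δ' N \ N) := by
          intro P hP a b hInd hStr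
          exact (h3 P hP a b).mpr ⟨N, hInd, hStr⟩
        exact ((hδ N).2.2 _ (fun j hj => hj.2) hRD hi).1
      · exact h1a N hi
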